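/- Work in the quaternion algebra over the complex numbers, with complex imaginary unit I and quaternion units i, j, k, and let ω₁ = (−1 + I√3)/2 and ω₂ = (−1 − I√3)/2 be the two primitive cube roots of unity. Set α = 1 + 2i + 4j + 8k, β = 1 + ω₁·i + ω₁²·j + k, and γ = 1 + ω₂·i + ω₂²·j + k. Then for every integer n ≥ 0, jQ^{(3)}_n = (1/7)·[ 2^{n+3}·α + (3 + 2I√3)·ω₁^n·β + (3 − 2I√3)·ω₂^n·γ ], where complex scalars act on quaternions by scalar multiplication. -/

import Mathlib

open Quaternion Complex

/-- Third order Jacobsthal-Lucas numbers. -/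
def jL3 : ℕ → ℤ
  | 0 => 2
  | 1 => 1
  | 2 => 5
  | n + 3 => jL3 (n + 2) + jL3 (n + 1) + 2 * jL3 n

/-- The quaternion unit `i` in the quaternion algebra over `ℂ`. -/
noncomputable def qi : ℍ[ℂ] := ⟨0, 1, 0, 0⟩
/-- The quaternion unit `j` in the quaternion algebra over `ℂ`. -/
noncomputable def qj : ℍ[ℂ] := ⟨0, 0, 1, 0⟩
/-- The quaternion unit `k` in the quaternion algebra over `ℂ`. -/
noncomputable def qk : ℍ[ℂ] := ⟨0, 0, 0, 1⟩

/-- The `n`-th third order Jacobsthal-Lucas quaternion, viewed in the quaternion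
algebra over `ℂ`. -/
noncomputable def jQ (n : ℕ) : ℍ[ℂ] :=
  (jL3 n : ℂ) + (jL3 (n + 1) : ℂ) * qi + (jL3 (n + 2) : ℂ) * qj + (jL3 (n + 3) : ℂ) * qk

/-- `ω₁ = (−1 + I√3)/2`, a primitive cube root of unity. -/
noncomputable def ω₁ : ℂ := (-1 + Complex.I * Real.sqrt 3) / 2
/-- `ω₂ = (−1 − I√3)/2`, the other primitive cube root of unity. -/
noncomputable def ω₂ : ℂ := (-1 - Complex.I * Real.sqrt 3) / 2

/-- `α = 1 + 2i + 4j + 8k`. -/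
noncomputable def qα : ℍ[ℂ] := 1 + 2 * qi + 4 * qj + 8 * qk
/-- `β = 1 + ω₁·i + ω₁²·j + k`. -/
noncomputable def qβ : ℍ[ℂ] := 1 + ω₁ • qi + (ω₁ ^ 2) • qj + qk
/-- `γ = 1 + ω₂·i + ω₂²·j + k`. -/
noncomputable def qγ : ℍ[ℂ] := 1 + ω₂ • qi + (ω₂ ^ 2) • qj + qk

/- Auxiliary lemmas -/

lemma hs3 : ((Real.sqrt 3 : ℝ) : ℂ)^2 = 3 := by
  rw [← Complex.ofReal_pow, Real.sq_sqrt (by norm_num : (3:ℝ) ≥ 0)]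
  norm_num

lemma hq1 : ω₁^2 + ω₁ + 1 = 0 := by
  simp only [ω₁]
  linear_combination (-1/4 : ℂ)*hs3 + (((Real.sqrt 3:ℝ):ℂ)^2/4)*Complex.I_sq

lemma hq2 : ω₂^2 + ω₂ + 1 = 0 := by
  simp only [ω₂]
  linear_combination (-1/4 : ℂ)*hs3 + (((Real.sqrt 3:ℝ):ℂ)^2/4)*Complex.I_sq

lemma hone1 : ω₁^3 = 1 := by linear_combination (ω₁ - 1) * hq1
lemma hone2 : ω₂^3 = 1 := by linear_combination (ω₂ - 1) * hq2

lemma hcube1 : ω₁^3 = ω₁^2 + ω₁ + 2 := by linear_combination (ω₁ - 2) * hq1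
lemma hcube2 : ω₂^3 = ω₂^2 + ω₂ + 2 := by linear_combination (ω₂ - 2) * hq2

lemma key : ∀ n : ℕ, (jL3 n : ℂ) * 7 =
    2^(n+3) + (3 + 2*Complex.I*Real.sqrt 3) * ω₁^n + (3 - 2*Complex.I*Real.sqrt 3) * ω₂^n := by
  intro n
  induction n using jL3.induct with
  | case1 =>
      simp only [jL3]
      push_cast
      ring
  | case2 =>
      simp only [jL3, ω₁, ω₂]
      push_cast
      linear_combination (2 : ℂ)*hs3 + (-2*((Real.sqrt 3:ℝ):ℂ)^2)*Complex.I_sq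
  | case3 =>
      simp only [jL3, ω₁, ω₂]
      push_cast
      linear_combination (-1/2 : ℂ)*hs3 + (((Real.sqrt 3:ℝ):ℂ)^2/2)*Complex.I_sq
  | case4 n ih2 ih1 ih0 =>
      show ((jL3 (n+2) + jL3 (n+1) + 2 * jL3 n : ℤ) : ℂ) * 7 = _
      push_cast
      simp only [Nat.succ_eq_add_one]
      linear_combination ih2 + ih1 + 2*ih0 -
        ((3 + 2*Complex.I*Real.sqrt 3) * ω₁^n) * hcube1 -
        ((3 - 2*Complex.I*Real.sqrt 3) * ω₂^n) * hcube2

lemma qi_re : qi.re = 0 := rfl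
lemma qi_imI : qi.imI = 1 := rfl
lemma qi_imJ : qi.imJ = 0 := rfl
lemma qi_imK : qi.imK = 0 := rfl
lemma qj_re : qj.re = 0 := rfl
lemma qj_imI : qj.imI = 0 := rfl
lemma qj_imJ : qj.imJ = 1 := rfl
lemma qj_imK : qj.imK = 0 := rfl
lemma qk_re : qk.re = 0 := rfl
lemma qk_imI : qk.imI = 0 := rfl
lemma qk_imJ : qk.imJ = 0 := rfl
lemma qk_imK : qk.imK = 1 := rfl

theorem third_order_jacobsthal_lucas_quaternion_binet (n : ℕ) :
    jQ n = (1 / 7 : ℂ) •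
      ((2 ^ (n + 3) : ℂ) • qα
        + ((3 + 2 * Complex.I * Real.sqrt 3) * ω₁ ^ n) • qβ
        + ((3 - 2 * Complex.I * Real.sqrt 3) * ω₂ ^ n) • qγ) := by
  have k0 := key n
  have k1 := key (n+1)
  have k2 := key (n+2)
  have k3 := key (n+3)
  ext <;>
    simp [jQ, qα, qβ, qγ, qi_re, qi_imI, qi_imJ, qi_imK, qj_re, qj_imI, qj_imJ, qj_imK,
      qk_re, qk_imI, qk_imJ, qk_imK,
      show (2:ℍ[ℂ]).re = 2 from rfl, show (2:ℍ[ℂ]).imI = 0 from rfl,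
      show (2:ℍ[ℂ]).imJ = 0 from rfl, show (2:ℍ[ℂ]).imK = 0 from rfl,
      show (4:ℍ[ℂ]).re = 4 from rfl, show (4:ℍ[ℂ]).imI = 0 from rfl,
      show (4:ℍ[ℂ]).imJ = 0 from rfl, show (4:ℍ[ℂ]).imK = 0 from rfl,
      show (8:ℍ[ℂ]).re = 8 from rfl, show (8:ℍ[ℂ]).imI = 0 from rfl,
      show (8:ℍ[ℂ]).imJ = 0 from rfl, show (8:ℍ[ℂ]).imK = 0 from rfl]
  · linear_combination (1/7 : ℂ) * k0
  · linear_combination (1/7 : ℂ) * k1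
  · linear_combination (1/7 : ℂ) * k2
  · linear_combination (1/7 : ℂ) * k3
      + ((3 + 2*Complex.I*Real.sqrt 3) * ω₁^n / 7) * hone1
      + ((3 - 2*Complex.I*Real.sqrt 3) * ω₂^n / 7) * hone2
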